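/- arXiv:1106.2586 — 2 statements merged into one kernel-verified Lean document; each statement's English description precedes it below -/
import Mathlib

section
/- For elements x, y in a Coxeter group W, the set {uy : u ≤ x} contains a unique minimal element in Bruhat order, denoted x ▷ y (the downwards Demazure product); moreover x ▷ y = u''y for some u'' ≤ x with ℓ(x ▷ y) = ℓ(y) − ℓ(u''). -/
namespace DemazureAux

open List CoxeterSystem

variable {B W : Type*} [Group W] {M : CoxeterMatrix B} (cs : CoxeterSystem M W)

local prefix:100 "s" => cs.simple
local prefix:100 "π" => cs.wordProd
local prefix:100 "ℓ" => cs.length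

noncomputable section
open Classical in
/-- The basic involution on `W × ZMod 2` used to build the parity representation. -/
def phiFun (i : B) (p : W × ZMod 2) : W × ZMod 2 :=
  (s i * p.1 * s i, p.2 + if p.1 = s i then 1 else 0)

lemma phiFun_involutive (i : B) : Function.Involutive (phiFun cs i) := by
  rintro ⟨t, ε⟩
  classical
  simp only [phiFun]
  have h1 : s i * (s i * t * s i) * s i = t := by
    rw [← mul_assoc, ← mul_assoc, cs.simple_mul_simple_self, one_mul, mul_assoc,
      cs.simple_mul_simple_self, mul_one]
  have h2 : (s i * t * s i = s i) ↔ (t = s i) := by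
    constructor
    · intro h
      have h' : s i * (s i * t * s i) * s i = s i * s i * s i := by
        rw [h]
      rw [h1, cs.simple_mul_simple_self, one_mul] at h'
      exact h'
    · rintro rfl; rw [cs.simple_mul_simple_self, one_mul]
  have h3 : ∀ c : ZMod 2, c + c = 0 := by decide
  ext
  · exact h1
  · simp only [h2]
    by_cases h : t = s i <;> simp [h, add_assoc, h3]

/-- The involution as a permutation. -/
def phi (i : B) : Equiv.Perm (W × ZMod 2) := (phiFun_involutive cs i).toPerm

lemma phi_apply (i : B) (p : W × ZMod 2) : phi cs i p = phiFun cs i p := rfl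

open Classical in
lemma phi_pow_apply (i i' : B) (k : ℕ) (t : W) (ε : ZMod 2) :
    ((phi cs i * phi cs i') ^ k) (t, ε) =
      ((s i * s i') ^ k * t * ((s i * s i') ^ k)⁻¹,
        ε + ∑ e ∈ Finset.range (2 * k), (if t = s i' * (s i * s i') ^ e then (1 : ZMod 2) else 0)) := by
  have haa : s i * s i = 1 := cs.simple_mul_simple_self i
  have hbb : s i' * s i' = 1 := cs.simple_mul_simple_self i'
  have hx_inv : (s i * s i')⁻¹ = s i' * s i := by
    rw [mul_inv_rev, cs.inv_simple, cs.inv_simple]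
  have hcalc : ∀ e : ℕ, (s i * s i')⁻¹ * (s i' * (s i * s i') ^ e) * (s i * s i')
      = s i' * (s i * s i') ^ (e + 2) := by
    intro e
    rw [hx_inv]
    calc s i' * s i * (s i' * (s i * s i') ^ e) * (s i * s i')
        = s i' * ((s i * s i') * (s i * s i') ^ e) * (s i * s i') := by
          simp [mul_assoc]
      _ = s i' * (s i * s i') ^ (e + 1) * (s i * s i') := by rw [← pow_succ']
      _ = s i' * (s i * s i') ^ (e + 2) := by rw [mul_assoc, ← pow_succ]
  have key : ∀ (u : W) (e : ℕ),
      ((s i * s i') * u * (s i * s i')⁻¹ = s i' * (s i * s i') ^ e) ↔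
        (u = s i' * (s i * s i') ^ (e + 2)) := by
    intro u e
    constructor
    · intro h
      rw [← hcalc e, ← h]
      group
    · intro h
      rw [h, ← hcalc e]
      group
  have hg : ∀ (u : W) (δ : ZMod 2), (phi cs i * phi cs i') ((u, δ) : W × ZMod 2) =
      ((s i * s i') * u * (s i * s i')⁻¹,
        δ + (if u = s i' * (s i * s i') ^ 0 then (1:ZMod 2) else 0)
          + (if u = s i' * (s i * s i') ^ 1 then (1:ZMod 2) else 0)) := by
    intro u δ
    rw [Equiv.Perm.mul_apply, phi_apply, phi_apply]
    simp only [phiFun]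
    have e0 : (u = s i') = (u = s i' * (s i * s i') ^ 0) := by rw [pow_zero, mul_one]
    have e1 : (s i' * u * s i' = s i) = (u = s i' * (s i * s i') ^ 1) := by
      apply propext
      rw [pow_one]
      constructor
      · intro h
        have : s i' * (s i' * u * s i') * s i' = s i' * s i * s i' := by rw [h]
        rw [← mul_assoc, ← mul_assoc, hbb, one_mul, mul_assoc, hbb, mul_one] at this
        rw [this]
        simp [mul_assoc]
      · intro h
        rw [h]
        calc s i' * (s i' * (s i * s i')) * s i'
            = (s i' * s i') * s i * (s i' * s i') := by simp [mul_assoc]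
          _ = s i := by rw [hbb, one_mul, mul_one]
    refine Prod.ext ?_ ?_
    · show s i * (s i' * u * s i') * s i = (s i * s i') * u * (s i * s i')⁻¹
      rw [hx_inv]
      simp [mul_assoc]
    · show δ + (if u = s i' then (1:ZMod 2) else 0)
          + (if s i' * u * s i' = s i then (1:ZMod 2) else 0)
        = δ + (if u = s i' * (s i * s i') ^ 0 then (1:ZMod 2) else 0)
          + (if u = s i' * (s i * s i') ^ 1 then (1:ZMod 2) else 0)
      rw [e0, e1]
  induction k generalizing t ε with
  | zero => simp
  | succ k ih =>
    rw [pow_succ, Equiv.Perm.mul_apply, hg t ε, ih]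
    refine Prod.ext ?_ ?_
    · show (s i * s i') ^ k * ((s i * s i') * t * (s i * s i')⁻¹) * ((s i * s i') ^ k)⁻¹
        = (s i * s i') ^ (k + 1) * t * ((s i * s i') ^ (k + 1))⁻¹
      simp [pow_succ, mul_inv_rev, mul_assoc]
    · show (ε + (if t = s i' * (s i * s i') ^ 0 then (1:ZMod 2) else 0)
          + (if t = s i' * (s i * s i') ^ 1 then (1:ZMod 2) else 0))
          + ∑ e ∈ Finset.range (2 * k),
            (if (s i * s i') * t * (s i * s i')⁻¹ = s i' * (s i * s i') ^ e then (1:ZMod 2) else 0)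
        = ε + ∑ e ∈ Finset.range (2 * (k + 1)),
            (if t = s i' * (s i * s i') ^ e then (1:ZMod 2) else 0)
      have hsum : ∑ e ∈ Finset.range (2 * k),
          (if (s i * s i') * t * (s i * s i')⁻¹ = s i' * (s i * s i') ^ e then (1:ZMod 2) else 0)
          = ∑ e ∈ Finset.range (2 * k),
            (if t = s i' * (s i * s i') ^ (e + 2) then (1:ZMod 2) else 0) := by
        apply Finset.sum_congr rfl
        intro e _
        congr 1
        exact propext (key t e)
      rw [hsum]
      have h2k : 2 * (k + 1) = (2 * k + 1) + 1 := by ring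
      rw [h2k,
        Finset.sum_range_succ' (fun e => if t = s i' * (s i * s i') ^ e then (1:ZMod 2) else 0)
          (2 * k + 1),
        Finset.sum_range_succ'
          (fun e => if t = s i' * (s i * s i') ^ (e + 1) then (1:ZMod 2) else 0) (2 * k)]
      simp only [show ∀ e : ℕ, e + 1 + 1 = e + 2 from fun e => rfl]
      abel

open Classical in
lemma phi_isLiftable : M.IsLiftable (fun i => phi cs i) := by
  intro i i'
  ext ⟨t, ε⟩
  · show (((phi cs i * phi cs i') ^ M i i') ((t, ε) : W × ZMod 2)).1 = t
    rw [phi_pow_apply, cs.simple_mul_simple_pow]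
    simp
  · show (((phi cs i * phi cs i') ^ M i i') ((t, ε) : W × ZMod 2)).2 = ε
    rw [phi_pow_apply]
    have hzero : ∑ e ∈ Finset.range (2 * M i i'),
        (if t = s i' * (s i * s i') ^ e then (1 : ZMod 2) else 0) = 0 := by
      rw [two_mul, Finset.sum_range_add, ← Finset.sum_add_distrib]
      have hterm : ∀ e, (if t = s i' * (s i * s i') ^ e then (1 : ZMod 2) else 0)
          + (if t = s i' * (s i * s i') ^ (M i i' + e) then (1 : ZMod 2) else 0) = 0 := by
        intro e
        have hpe : (s i * s i') ^ (M i i' + e) = (s i * s i') ^ e := by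
          rw [pow_add, cs.simple_mul_simple_pow, one_mul]
        rw [hpe]
        by_cases h : t = s i' * (s i * s i') ^ e
        · simp only [if_pos h]
          decide
        · simp only [if_neg h, add_zero]
      calc ∑ e ∈ Finset.range (M i i'),
            ((if t = s i' * (s i * s i') ^ e then (1 : ZMod 2) else 0)
            + (if t = s i' * (s i * s i') ^ (M i i' + e) then (1 : ZMod 2) else 0))
          = ∑ e ∈ Finset.range (M i i'), (0 : ZMod 2) := by
            apply Finset.sum_congr rfl; intro e _; exact hterm e
        _ = 0 := by simp
    rw [hzero, add_zero]

/-- The parity representation `W →* Perm (W × ZMod 2)`. -/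
def Theta : W →* Equiv.Perm (W × ZMod 2) := cs.lift ⟨fun i => phi cs i, phi_isLiftable cs⟩

lemma Theta_simple (i : B) : Theta cs (s i) = phi cs i :=
  cs.lift_apply_simple (phi_isLiftable cs) i

/-- `eta w t` is the parity of the number of times `t` occurs in the right inversion
sequence of any word for `w`. -/
def eta (w t : W) : ZMod 2 := ((Theta cs w) (t, 0)).2

open Classical in
lemma Theta_apply (w t : W) (ε : ZMod 2) :
    Theta cs w (t, ε) = (w * t * w⁻¹, ε + eta cs w t) := by
  induction w using cs.simple_induction_left generalizing t ε with
  | one => simp [eta]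
  | mul_simple_left w i ih =>
    have key : ∀ δ : ZMod 2, Theta cs (s i * w) (t, δ)
        = (s i * (w * t * w⁻¹) * s i,
            δ + eta cs w t + (if w * t * w⁻¹ = s i then (1 : ZMod 2) else 0)) := by
      intro δ
      rw [map_mul, Equiv.Perm.mul_apply, ih, Theta_simple, phi_apply]
      simp only [phiFun]
    have h2 : eta cs (s i * w) t
        = eta cs w t + (if w * t * w⁻¹ = s i then (1 : ZMod 2) else 0) := by
      show (Theta cs (s i * w) (t, 0)).2 = _
      rw [key 0, zero_add]
    rw [key ε, h2]
    refine Prod.ext ?_ ?_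
    · show s i * (w * t * w⁻¹) * s i = (s i * w) * t * (s i * w)⁻¹
      rw [mul_inv_rev, cs.inv_simple]
      simp [mul_assoc]
    · show ε + eta cs w t + _ = ε + (eta cs w t + _)
      rw [add_assoc]

lemma eta_one (t : W) : eta cs 1 t = 0 := by simp [eta]

lemma eta_mul (w₁ w₂ t : W) :
    eta cs (w₁ * w₂) t = eta cs w₂ t + eta cs w₁ (w₂ * t * w₂⁻¹) := by
  have h : Theta cs (w₁ * w₂) (t, 0) = Theta cs w₁ (Theta cs w₂ (t, 0)) := by
    rw [map_mul, Equiv.Perm.mul_apply]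
  show (Theta cs (w₁ * w₂) (t, 0)).2 = _
  rw [h, Theta_apply cs w₂ t 0, Theta_apply cs w₁ _ _, zero_add]

open Classical in
lemma eta_simple (i : B) (t : W) :
    eta cs (s i) t = if t = s i then 1 else 0 := by
  show (Theta cs (s i) (t, 0)).2 = _
  rw [Theta_simple, phi_apply]
  simp only [phiFun, zero_add]

lemma eta_conj (u v : W) : eta cs u⁻¹ (u * v * u⁻¹) = eta cs u v := by
  have h := eta_mul cs u⁻¹ u v
  rw [inv_mul_cancel, eta_one] at h
  have hsolve : ∀ a b : ZMod 2, 0 = a + b → b = a := by decide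
  exact hsolve _ _ h

lemma eta_refl_self {t : W} (ht : cs.IsReflection t) : eta cs t t = 1 := by
  obtain ⟨u, i, rfl⟩ := ht
  classical
  have h1 : eta cs (u * s i * u⁻¹) (u * s i * u⁻¹)
      = eta cs u⁻¹ (u * s i * u⁻¹) + eta cs (u * s i) (u⁻¹ * (u * s i * u⁻¹) * u⁻¹⁻¹) := by
    rw [← eta_mul cs (u * s i) u⁻¹]
  have h2 : u⁻¹ * (u * s i * u⁻¹) * u⁻¹⁻¹ = s i := by group
  rw [h2] at h1
  have h3 : eta cs (u * s i) (s i) = eta cs (s i) (s i) + eta cs u (s i * s i * (s i)⁻¹) := by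
    rw [← eta_mul]
  have h4 : s i * s i * (s i)⁻¹ = s i := by group
  rw [h4, eta_simple, if_pos rfl] at h3
  rw [h1, h3, eta_conj cs u (s i)]
  have hneg : ∀ c : ZMod 2, c + (1 + c) = 1 := by decide
  exact hneg _

lemma eta_eq_count (ω : List B) (t : W) [DecidableEq W] :
    eta cs (π ω) t = (List.count t (cs.rightInvSeq ω) : ZMod 2) := by
  induction ω with
  | nil => simp [eta_one]
  | cons i ω ih =>
    rw [cs.wordProd_cons, eta_mul cs (s i) (π ω) t, eta_simple]
    have hris : cs.rightInvSeq (i :: ω) = ((π ω)⁻¹ * s i * π ω) :: cs.rightInvSeq ω := rfl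
    rw [hris, List.count_cons, ih]
    push_cast
    have hiff : ((π ω) * t * (π ω)⁻¹ = s i) ↔ ((π ω)⁻¹ * s i * π ω = t) := by
      constructor
      · intro h; rw [← h]; try group
      · intro h; rw [← h]; try group
    by_cases h : (π ω) * t * (π ω)⁻¹ = s i
    · rw [if_pos h, if_pos (by simpa using hiff.mp h)]
      try ring
    · rw [if_neg h, if_neg (by simpa using fun hh => h (hiff.mpr hh))]
      try ring

/-- If `t` is a right inversion of `w`, then `eta w t = 1`. -/
lemma eta_eq_one_of_rightInversion {w t : W} (ht : cs.IsReflection t)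
    (hlt : ℓ (w * t) < ℓ w) : eta cs w t = 1 := by
  classical
  by_contra hne
  have h0 : eta cs w t = 0 := by
    have : ∀ c : ZMod 2, c = 0 ∨ c = 1 := by decide
    rcases this (eta cs w t) with h | h
    · exact h
    · exact absurd h hne
  have h1 : eta cs (w * t) t = 1 := by
    rw [eta_mul cs w t t, eta_refl_self cs ht, ht.inv]
    have : t * t * t = t := by rw [ht.mul_self, one_mul]
    rw [this, h0, add_zero]
  obtain ⟨ρ, hρred, hρ⟩ := cs.exists_reduced_word' (w * t)
  rw [hρ] at h1
  rw [eta_eq_count] at h1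
  have hmem : t ∈ cs.rightInvSeq ρ := by
    by_contra hmem
    rw [List.count_eq_zero_of_not_mem hmem] at h1
    simp at h1
  have hinv := cs.isRightInversion_of_mem_rightInvSeq hρred hmem
  rw [← hρ] at hinv
  have hwt : w * t * t = w := by rw [mul_assoc, ht.mul_self, mul_one]
  have hlen : ℓ (w * t * t) < ℓ (w * t) := hinv.2
  rw [hwt] at hlen
  omega

/-- Strong exchange property. -/
lemma strong_exchange {w t : W} (ht : cs.IsReflection t) (hlt : ℓ (w * t) < ℓ w)
    (ω : List B) (hω : π ω = w) :
    ∃ j < ω.length, π (ω.eraseIdx j) = w * t := by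
  classical
  have h1 : eta cs w t = 1 := eta_eq_one_of_rightInversion cs ht hlt
  rw [← hω, eta_eq_count] at h1
  have hmem : t ∈ cs.rightInvSeq ω := by
    by_contra hmem
    rw [List.count_eq_zero_of_not_mem hmem] at h1
    simp at h1
  obtain ⟨j, hj, hjt⟩ := List.mem_iff_getElem.mp hmem
  rw [cs.length_rightInvSeq] at hj
  refine ⟨j, hj, ?_⟩
  have := cs.wordProd_mul_getD_rightInvSeq ω j
  rw [List.getD_eq_getElem (cs.rightInvSeq ω) 1 (by rw [cs.length_rightInvSeq]; exact hj), hjt]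
    at this
  rw [← this, hω]

/-- Left-handed strong exchange, in sublist form. -/
lemma strong_exchange_left {w t : W} (ht : cs.IsReflection t) (hlt : ℓ (t * w) < ℓ w)
    (ω : List B) (hω : π ω = w) :
    ∃ σ, σ.Sublist ω ∧ σ.length + 1 = ω.length ∧ π σ = t * w := by
  have hinv : ℓ (w⁻¹ * t) < ℓ w⁻¹ := by
    have : (w⁻¹ * t)⁻¹ = t * w := by rw [mul_inv_rev, inv_inv, ht.inv]
    rw [← cs.length_inv (w⁻¹ * t), this, cs.length_inv]
    exact hlt
  obtain ⟨j, hj, hjp⟩ := strong_exchange cs ht hinv ω.reverse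
    (by rw [cs.wordProd_reverse, hω])
  refine ⟨(ω.reverse.eraseIdx j).reverse, ?_, ?_, ?_⟩
  · have := (List.eraseIdx_sublist ω.reverse j).reverse
    simpa using this
  · have hj' : j < ω.reverse.length := by simpa using hj
    rw [List.length_reverse, List.length_eraseIdx_add_one hj', List.length_reverse]
  · rw [cs.wordProd_reverse, hjp, mul_inv_rev, inv_inv, ht.inv]

/-- Deletion property: every word contains a reduced sublist with the same product. -/
lemma exists_reduced_sublist (ω : List B) :
    ∃ σ, σ.Sublist ω ∧ cs.IsReduced σ ∧ π σ = π ω := by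
  induction ω with
  | nil => exact ⟨[], List.Sublist.refl [], by simp [CoxeterSystem.IsReduced], rfl⟩
  | cons i ρ ih =>
    obtain ⟨σ₀, hs, hred, hprod⟩ := ih
    rcases cs.length_simple_mul (π ρ) i with h | h
    · refine ⟨i :: σ₀, hs.cons₂ i, ?_, ?_⟩
      · show ℓ (π (i :: σ₀)) = (i :: σ₀).length
        rw [cs.wordProd_cons, hprod, h, List.length_cons, ← hprod, hred]
      · rw [cs.wordProd_cons, cs.wordProd_cons, hprod]
    · have hlt : ℓ (s i * π σ₀) < ℓ (π σ₀) := by rw [hprod]; omega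
      obtain ⟨σ₁, hsub₁, hlen₁, hπ₁⟩ :=
        strong_exchange_left cs (cs.isReflection_simple i) hlt σ₀ rfl
      refine ⟨σ₁, (hsub₁.trans hs).trans (List.sublist_cons_self i ρ), ?_, ?_⟩
      · show ℓ (π σ₁) = σ₁.length
        rw [hπ₁, hprod]
        have h1 : ℓ (π σ₀) = σ₀.length := hred
        rw [hprod] at h1
        omega
      · rw [hπ₁, hprod, cs.wordProd_cons]

end

/-- The auxiliary (Bruhat) order defined via chains of reflections which
increase the length. -/
inductive TLe (cs : CoxeterSystem M W) : W → W → Prop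
  | refl (w : W) : TLe cs w w
  | step {u w t : W} : TLe cs u w → cs.IsReflection t →
      cs.length w < cs.length (w * t) → TLe cs u (w * t)

lemma TLe.trans {u v w : W} (h1 : TLe cs u v) (h2 : TLe cs v w) : TLe cs u w := by
  induction h2 with
  | refl => exact h1
  | step _ ht hlen ih => exact TLe.step ih ht hlen

lemma TLe.length_le {u v : W} (h : TLe cs u v) : ℓ u ≤ ℓ v := by
  induction h with
  | refl => exact le_rfl
  | step _ _ hlen ih => omega

lemma tle_one {u : W} (h : TLe cs u 1) : u = 1 := by
  have := h.length_le
  rw [cs.length_one] at this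
  exact cs.length_eq_zero_iff.mp (Nat.le_zero.mp this)

lemma TLe.step_left {u w t : W} (h : TLe cs u w) (ht : cs.IsReflection t)
    (hlen : ℓ w < ℓ (t * w)) : TLe cs u (t * w) := by
  have he : w * (w⁻¹ * t * w⁻¹⁻¹) = t * w := by group
  have := TLe.step h (ht.conj w⁻¹) (by rw [he]; exact hlen)
  rwa [he] at this

lemma TLe.inv {u v : W} (h : TLe cs u v) : TLe cs u⁻¹ v⁻¹ := by
  induction h with
  | refl => exact TLe.refl _
  | @step w t _ ht hlen ih =>
    have hlen' : ℓ w⁻¹ < ℓ (t * w⁻¹) := by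
      have h1 : ℓ (t * w⁻¹) = ℓ (w * t) := by
        rw [← cs.length_inv (t * w⁻¹), mul_inv_rev, inv_inv, ht.inv]
      rw [h1, cs.length_inv]
      exact hlen
    have := TLe.step_left cs ih ht hlen'
    have he : (w * t)⁻¹ = t * w⁻¹ := by rw [mul_inv_rev, ht.inv]
    rwa [← he] at this

/-- Any `TLe`-smaller element appears as a reduced subword of every reduced word. -/
lemma tle_subword {u v : W} (h : TLe cs u v) :
    ∀ ρ : List B, cs.IsReduced ρ → π ρ = v →
      ∃ ρ', ρ'.Sublist ρ ∧ cs.IsReduced ρ' ∧ π ρ' = u := by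
  induction h with
  | refl => exact fun ρ hρred hπ => ⟨ρ, List.Sublist.refl ρ, hρred, hπ⟩
  | @step w t _ ht hlen ih =>
    intro ρ hρred hπ
    have hwtt : w * t * t = w := by rw [mul_assoc, ht.mul_self, mul_one]
    obtain ⟨j, hj, hjp⟩ := strong_exchange cs ht (by rw [hwtt]; exact hlen) ρ hπ
    rw [hwtt] at hjp
    obtain ⟨σ, hσsub, hσred, hσπ⟩ := exists_reduced_sublist cs (ρ.eraseIdx j)
    obtain ⟨ρ', h1, h2, h3⟩ := ih σ hσred (by rw [hσπ, hjp])
    exact ⟨ρ', h1.trans (hσsub.trans (List.eraseIdx_sublist ρ j)), h2, h3⟩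

/-- Lifting property for the order `TLe`. -/
lemma tle_lift_right {u w : W} (h : TLe cs u w) (i : B) :
    TLe cs (u * s i) w ∨ TLe cs (u * s i) (w * s i) := by
  induction h with
  | refl => exact Or.inr (TLe.refl _)
  | @step z t _ ht hlen ih =>
    rcases ih with hus | hus
    · exact Or.inl (TLe.step hus ht hlen)
    · -- hus : TLe (u * s i) (z * s i)
      have hzz : z * s i * s i = z := cs.simple_mul_simple_cancel_right i
      by_cases ha : ℓ (z * s i) < ℓ z
      · -- z * s i < z; go through z
        left
        have h1 : TLe cs (u * s i) z := by
          have := TLe.step hus (cs.isReflection_simple i) (by rw [hzz]; exact ha)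
          rwa [hzz] at this
        exact TLe.step h1 ht hlen
      · have ha' : ℓ z < ℓ (z * s i) := by
          have := cs.length_mul_simple_ne z i
          omega
        have hzsi : ℓ (z * s i) = ℓ z + 1 := by
          rcases cs.length_mul_simple z i with h | h <;> omega
        have hrefl : cs.IsReflection (s i * t * s i) := by
          have := ht.conj (s i)
          rwa [cs.inv_simple] at this
        have heq : (z * s i) * (s i * t * s i) = z * t * s i := by
          simp [mul_assoc, cs.simple_mul_simple_cancel_left]
        by_cases hb : ℓ (z * t) < ℓ (z * t * s i)
        · right
          have hlen2 : ℓ (z * s i) < ℓ ((z * s i) * (s i * t * s i)) := by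
            rw [heq]; omega
          have := TLe.step hus hrefl hlen2
          rwa [heq] at this
        · have hb' : ℓ (z * t * s i) < ℓ (z * t) := by
            have := cs.length_mul_simple_ne (z * t) i
            omega
          by_cases hc : ℓ (z * s i) < ℓ (z * t * s i)
          · right
            have hlen2 : ℓ (z * s i) < ℓ ((z * s i) * (s i * t * s i)) := by
              rw [heq]; exact hc
            have := TLe.step hus hrefl hlen2
            rwa [heq] at this
          · -- final case:  ℓ(z*t*s i) < ℓ(z*s i);  show z * s i = z * t
            have hc' : ℓ (z * t * s i) < ℓ (z * s i) := by
              have hne : ℓ ((z * s i) * (s i * t * s i)) ≠ ℓ (z * s i) :=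
                hrefl.length_mul_left_ne (z * s i)
              rw [heq] at hne
              omega
            have h1 : ℓ (z * t * s i) + 1 = ℓ (z * t) := by
              rcases cs.length_mul_simple (z * t) i with h | h <;> omega
            have hzt : ℓ (z * t) = ℓ z + 1 := by omega
            have hztsi : ℓ (z * t * s i) = ℓ z := by omega
            obtain ⟨τ, hτred, hτ⟩ := cs.exists_reduced_word' (z * t * s i)
            have hτlen : τ.length = ℓ z := by
              have : ℓ (π τ) = τ.length := hτred
              rw [← hτ] at this
              omega
            have hρπ : π (τ ++ [i]) = z * t := by
              rw [cs.wordProd_append, cs.wordProd_singleton, ← hτ]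
              exact cs.simple_mul_simple_cancel_right i
            have hρred : cs.IsReduced (τ ++ [i]) := by
              show ℓ (π (τ ++ [i])) = (τ ++ [i]).length
              rw [hρπ, List.length_append, List.length_singleton, hτlen, hzt]
            have hwtt : z * t * t = z := by rw [mul_assoc, ht.mul_self, mul_one]
            obtain ⟨j, hj, hjp⟩ := strong_exchange cs ht
              (by rw [hwtt]; exact hlen) (τ ++ [i]) hρπ
            rw [hwtt] at hjp
            by_cases hjτ : j < τ.length
            · exfalso
              rw [List.eraseIdx_append_of_lt_length hjτ [i]] at hjp
              have : z * s i = π (τ.eraseIdx j) := by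
                rw [← hjp, cs.wordProd_append, cs.wordProd_singleton]
                exact cs.simple_mul_simple_cancel_right i
              have hle : ℓ (z * s i) ≤ (τ.eraseIdx j).length := by
                rw [this]; exact cs.length_wordProd_le _
              have := List.length_eraseIdx_add_one hjτ
              omega
            · have hjeq : j = τ.length := by
                rw [List.length_append, List.length_singleton] at hj
                omega
              rw [hjeq, List.eraseIdx_append_of_length_le (le_refl τ.length) [i]] at hjp
              simp only [Nat.sub_self, List.eraseIdx_cons_zero, List.append_nil] at hjp
              -- hjp : π τ = z, but π τ = z * t * s i
              have hzts : z * t * s i = z := by rw [hτ, hjp]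
              have h2 : z * t = z * s i := by
                have h3 := congrArg (fun q => q * s i) hzts
                simpa only [cs.simple_mul_simple_cancel_right] using h3
              rw [← h2] at hus
              exact Or.inl hus

/-- Left-handed lifting property. -/
lemma tle_lift_left {u w : W} (h : TLe cs u w) (i : B) :
    TLe cs (s i * u) w ∨ TLe cs (s i * u) (s i * w) := by
  rcases tle_lift_right cs h.inv i with h1 | h1
  · left
    have := h1.inv
    rwa [mul_inv_rev, cs.inv_simple, inv_inv, inv_inv] at this
  · right
    have := h1.inv
    rwa [mul_inv_rev, mul_inv_rev, cs.inv_simple, inv_inv, inv_inv] at this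

lemma sublist_append_singleton {l' l₀ : List B} {a : B} (h : l'.Sublist (l₀ ++ [a])) :
    l'.Sublist l₀ ∨ ∃ m, l' = m ++ [a] ∧ m.Sublist l₀ := by
  have h1 : l'.reverse.Sublist (a :: l₀.reverse) := by
    have := h.reverse
    simpa using this
  rcases List.sublist_cons_iff.mp h1 with h2 | ⟨r, hr, hrs⟩
  · left
    have := h2.reverse
    simpa using this
  · right
    refine ⟨r.reverse, ?_, ?_⟩
    · have := congrArg List.reverse hr
      simpa using this
    · have := hrs.reverse
      simpa using this

/-- Any sublist of a reduced word has `TLe`-smaller product. -/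
lemma sublist_tle {l : List B} (hred : cs.IsReduced l) :
    ∀ l' : List B, l'.Sublist l → TLe cs (π l') (π l) := by
  induction l using List.reverseRecOn with
  | nil =>
    intro l' hsub
    rw [List.sublist_nil.mp hsub]
    exact TLe.refl _
  | append_singleton l₀ a ih =>
    intro l' hsub
    have hred₀ : cs.IsReduced l₀ := by
      have := hred.take l₀.length
      rwa [List.take_left] at this
    have he : π (l₀ ++ [a]) = π l₀ * s a := by
      rw [cs.wordProd_append, cs.wordProd_singleton]
    have hlu : ℓ (π l₀) < ℓ (π l₀ * s a) := by
      have h1 : ℓ (π (l₀ ++ [a])) = l₀.length + 1 := by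
        have : ℓ (π (l₀ ++ [a])) = (l₀ ++ [a]).length := hred
        simpa using this
      have h2 : ℓ (π l₀) = l₀.length := hred₀
      rw [← he] at *
      omega
    have hstep : TLe cs (π l₀) (π (l₀ ++ [a])) := by
      rw [he]
      exact TLe.step (TLe.refl _) (cs.isReflection_simple a) hlu
    rcases sublist_append_singleton hsub with h1 | ⟨m, rfl, hm⟩
    · exact TLe.trans cs (ih hred₀ l' h1) hstep
    · have hx := ih hred₀ m hm
      have hem : π (m ++ [a]) = π m * s a := by
        rw [cs.wordProd_append, cs.wordProd_singleton]
      rcases tle_lift_right cs hx a with h2 | h2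
      · rw [hem]
        exact TLe.trans cs h2 hstep
      · rw [hem, he]
        exact h2

/-- Descent dichotomy: if `u ≤ v` and `a` is a left descent of `v`, then either
`s a * u ≤ s a * v` (if `a` is a left descent of `u`) or `u ≤ s a * v` (otherwise). -/
lemma tle_descent {u v : W} {a : B} (h : TLe cs u v) (hv : ℓ (s a * v) < ℓ v) :
    (ℓ (s a * u) < ℓ u → TLe cs (s a * u) (s a * v)) ∧
    (ℓ u < ℓ (s a * u) → TLe cs u (s a * v)) := by
  obtain ⟨ρ₁, hρ₁red, hρ₁⟩ := cs.exists_reduced_word' (s a * v)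
  have hsav : ℓ (s a * v) + 1 = ℓ v := by
    rcases cs.length_simple_mul v a with h1 | h1 <;> omega
  have hπ : π (a :: ρ₁) = v := by
    rw [cs.wordProd_cons, ← hρ₁]
    exact cs.simple_mul_simple_cancel_left a
  have hρred : cs.IsReduced (a :: ρ₁) := by
    show ℓ (π (a :: ρ₁)) = (a :: ρ₁).length
    rw [hπ, List.length_cons]
    have : ℓ (π ρ₁) = ρ₁.length := hρ₁red
    rw [← hρ₁] at this
    omega
  obtain ⟨ρ', hsub, hρ'red, hπρ'⟩ := tle_subword cs h (a :: ρ₁) hρred hπ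
  rcases List.sublist_cons_iff.mp hsub with h1 | ⟨r, hr, hrs⟩
  · -- u is a subword of ρ₁ : u ≤ s a * v
    have hu1 : TLe cs u (s a * v) := by
      have := sublist_tle cs hρ₁red ρ' h1
      rwa [hπρ', ← hρ₁] at this
    constructor
    · intro hlt
      refine TLe.trans cs ?_ hu1
      have hcan : s a * (s a * u) = u := cs.simple_mul_simple_cancel_left a
      have := TLe.step_left cs (TLe.refl (s a * u)) (cs.isReflection_simple a)
        (by rw [hcan]; exact hlt)
      rwa [hcan] at this
    · intro _
      exact hu1
  · -- ρ' = a :: r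
    subst hr
    have hsar : π r = s a * u := by
      rw [← hπρ', cs.wordProd_cons]
      rw [cs.simple_mul_simple_cancel_left]
    have hrtle : TLe cs (s a * u) (s a * v) := by
      have := sublist_tle cs hρ₁red r hrs
      rwa [hsar, ← hρ₁] at this
    constructor
    · intro _
      exact hrtle
    · intro hgt
      exfalso
      have hl1 : ℓ u = r.length + 1 := by
        have : ℓ (π (a :: r)) = (a :: r).length := hρ'red
        rw [hπρ'] at this
        simpa using this
      have hl2 : ℓ (s a * u) ≤ r.length := by
        rw [← hsar]
        exact cs.length_wordProd_le r
      omega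

/-- Main construction: the downward Demazure product `x ▷ y`, with all its properties,
phrased with the auxiliary order `TLe`. -/
lemma demazure_aux (n : ℕ) : ∀ x y : W, ℓ x = n →
    ∃ m u'' : W, TLe cs u'' x ∧ m = u'' * y ∧ ℓ m + ℓ u'' = ℓ y ∧
      ∀ u : W, TLe cs u x → TLe cs m (u * y) := by
  induction n using Nat.strong_induction_on with
  | _ n ih =>
  intro x y hx
  by_cases hx1 : x = 1
  · subst hx1
    refine ⟨y, 1, TLe.refl 1, (one_mul y).symm, by rw [cs.length_one, add_zero], ?_⟩
    intro u hu
    rw [tle_one cs hu, one_mul]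
    exact TLe.refl y
  · obtain ⟨a, ha⟩ := cs.exists_leftDescent_of_ne_one hx1
    have ha' : ℓ (s a * x) < ℓ x := ha
    obtain ⟨m₁, u₁, hu₁, hm₁, hlen₁, hmin₁⟩ := ih (ℓ (s a * x)) (by omega) (s a * x) y rfl
    have hxeq : s a * (s a * x) = x := cs.simple_mul_simple_cancel_left a
    have hstepx : TLe cs (s a * x) x := by
      have := TLe.step_left cs (TLe.refl (s a * x)) (cs.isReflection_simple a)
        (by rw [hxeq]; exact ha')
      rwa [hxeq] at this
    -- helper facts used in both cases
    have hdich : ∀ u : W, TLe cs u x → TLe cs (s a * u) (s a * x) ∨ TLe cs u (s a * x) := by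
      intro u hu
      rcases cs.length_simple_mul u a with h1 | h1
      · exact Or.inr ((tle_descent cs hu ha').2 (by omega))
      · exact Or.inl ((tle_descent cs hu ha').1 (by omega))
    by_cases hm : ℓ (s a * m₁) < ℓ m₁
    · -- CASE A : a is a left descent of m₁
      have hmcan : s a * (s a * m₁) = m₁ := cs.simple_mul_simple_cancel_left a
      have h3 : TLe cs (s a * m₁) m₁ := by
        have := TLe.step_left cs (TLe.refl (s a * m₁)) (cs.isReflection_simple a)
          (by rw [hmcan]; exact hm)
        rwa [hmcan] at this
      refine ⟨s a * m₁, s a * u₁, ?_, by rw [hm₁, mul_assoc], ?_, ?_⟩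
      · rcases tle_lift_left cs hu₁ a with h1 | h1
        · exact TLe.trans cs h1 hstepx
        · rwa [hxeq] at h1
      · -- lengths
        have hsm : ℓ (s a * m₁) + 1 = ℓ m₁ := by
          rcases cs.length_simple_mul m₁ a with h1 | h1 <;> omega
        rcases cs.length_simple_mul u₁ a with h1 | h1
        · omega
        · exfalso
          have heq : (s a * u₁)⁻¹ * (s a * m₁) = y := by rw [hm₁]; group
          have hle := cs.length_mul_le ((s a * u₁)⁻¹) (s a * m₁)
          rw [heq, cs.length_inv] at hle
          omega
      · -- minimality
        intro u hu
        rcases hdich u hu with h1 | h1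
        · -- s a * u ≤ s a * x
          have h2 := hmin₁ (s a * u) h1
          have hz : s a * (s a * u * y) = u * y := by
            rw [mul_assoc (s a) u y, cs.simple_mul_simple_cancel_left]
          by_cases hza : ℓ (s a * u * y) < ℓ (u * y)
          · have h4 : TLe cs (s a * u * y) (u * y) := by
              have := TLe.step_left cs (TLe.refl (s a * u * y)) (cs.isReflection_simple a)
                (by rw [hz]; exact hza)
              rwa [hz] at this
            exact TLe.trans cs h3 (TLe.trans cs h2 h4)
          · have hv2 : ℓ (s a * (s a * u * y)) < ℓ (s a * u * y) := by
              have hne := cs.length_simple_mul_ne (s a * u * y) a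
              rw [hz] at *
              omega
            have h5 := (tle_descent cs h2 hv2).1 hm
            rwa [hz] at h5
        · -- u ≤ s a * x
          exact TLe.trans cs h3 (hmin₁ u h1)
    · -- CASE B : a is not a left descent of m₁
      have hm' : ℓ m₁ < ℓ (s a * m₁) := by
        have := cs.length_simple_mul_ne m₁ a
        omega
      refine ⟨m₁, u₁, TLe.trans cs hu₁ hstepx, hm₁, hlen₁, ?_⟩
      intro u hu
      rcases hdich u hu with h1 | h1
      · have h2 := hmin₁ (s a * u) h1
        have hz : s a * (s a * u * y) = u * y := by
          rw [mul_assoc (s a) u y, cs.simple_mul_simple_cancel_left]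
        by_cases hza : ℓ (s a * u * y) < ℓ (u * y)
        · have h4 : TLe cs (s a * u * y) (u * y) := by
            have := TLe.step_left cs (TLe.refl (s a * u * y)) (cs.isReflection_simple a)
              (by rw [hz]; exact hza)
            rwa [hz] at this
          exact TLe.trans cs h2 h4
        · have hv2 : ℓ (s a * (s a * u * y)) < ℓ (s a * u * y) := by
            have hne := cs.length_simple_mul_ne (s a * u * y) a
            rw [hz] at *
            omega
          have h5 := (tle_descent cs h2 hv2).2 hm'
          rwa [hz] at h5
      · exact hmin₁ u h1

end DemazureAux

/-- The Bruhat order on a Coxeter group, defined via the subword property: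
`u ≤ v` iff some reduced word for `v` contains a subword whose product is `u`. -/
def bruhatLE {B W : Type*} [Group W] {M : CoxeterMatrix B} (cs : CoxeterSystem M W)
    (u v : W) : Prop :=
  ∃ l : List B, cs.IsReduced l ∧ cs.wordProd l = v ∧
    ∃ l' : List B, l'.Sublist l ∧ cs.wordProd l' = u

namespace DemazureAux

variable {B W : Type*} [Group W] {M : CoxeterMatrix B} (cs : CoxeterSystem M W)

local prefix:100 "ℓ" => cs.length

lemma bruhatLE_of_tle {u v : W} (h : TLe cs u v) : bruhatLE cs u v := by
  obtain ⟨ρ, hred, hπ⟩ := cs.exists_reduced_word' v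
  obtain ⟨ρ', hsub, _, hπ'⟩ := tle_subword cs h ρ hred hπ.symm
  exact ⟨ρ, hred, hπ.symm, ρ', hsub, hπ'⟩

lemma tle_of_bruhatLE {u v : W} (h : bruhatLE cs u v) : TLe cs u v := by
  obtain ⟨l, hred, hπ, l', hsub, hπ'⟩ := h
  have := sublist_tle cs hred l' hsub
  rwa [hπ, hπ'] at this

lemma bruhatLE_antisymm {u v : W} (h1 : bruhatLE cs u v) (h2 : bruhatLE cs v u) : u = v := by
  have e1 : ℓ u ≤ ℓ v := (tle_of_bruhatLE cs h1).length_le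
  have e2 : ℓ v ≤ ℓ u := (tle_of_bruhatLE cs h2).length_le
  obtain ⟨l, hred, hπ, l', hsub, hπ'⟩ := h1
  have hlv : ℓ v = l.length := by rw [← hπ]; exact hred
  have hlu : ℓ u ≤ l'.length := by rw [← hπ']; exact cs.length_wordProd_le l'
  have hll : l'.length ≤ l.length := hsub.length_le
  have : l' = l := hsub.eq_of_length (by omega)
  rw [← hπ, ← hπ', this]

end DemazureAux

/-- The set `{uy : u ≤ x}` contains a unique minimal element `x ▷ y` in Bruhat order;
moreover `x ▷ y = u'' * y` for some `u'' ≤ x` with `ℓ(x ▷ y) = ℓ(y) − ℓ(u'')`. -/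
theorem downwards_demazure_right {B W : Type*} [Group W] {M : CoxeterMatrix B}
    (cs : CoxeterSystem M W) (x y : W) :
    (∃! m : W, (∃ u : W, bruhatLE cs u x ∧ m = u * y) ∧
      ∀ z : W, (∃ u : W, bruhatLE cs u x ∧ z = u * y) → bruhatLE cs m z) ∧
    (∀ m : W, ((∃ u : W, bruhatLE cs u x ∧ m = u * y) ∧
        ∀ z : W, (∃ u : W, bruhatLE cs u x ∧ z = u * y) → bruhatLE cs m z) →
      ∃ u'' : W, bruhatLE cs u'' x ∧ m = u'' * y ∧
        cs.length m + cs.length u'' = cs.length y) := by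
  classical
  obtain ⟨m₀, u₀, hu₀, hm₀, hlen₀, hmin₀⟩ :=
    DemazureAux.demazure_aux cs (cs.length x) x y rfl
  -- m₀ satisfies the defining property
  have hprop : (∃ u : W, bruhatLE cs u x ∧ m₀ = u * y) ∧
      ∀ z : W, (∃ u : W, bruhatLE cs u x ∧ z = u * y) → bruhatLE cs m₀ z := by
    constructor
    · exact ⟨u₀, DemazureAux.bruhatLE_of_tle cs hu₀, hm₀⟩
    · rintro z ⟨u, hu, rfl⟩
      exact DemazureAux.bruhatLE_of_tle cs
        (hmin₀ u (DemazureAux.tle_of_bruhatLE cs hu))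
  have huniq : ∀ m : W, ((∃ u : W, bruhatLE cs u x ∧ m = u * y) ∧
      ∀ z : W, (∃ u : W, bruhatLE cs u x ∧ z = u * y) → bruhatLE cs m z) → m = m₀ := by
    rintro m ⟨hmem, hmin⟩
    have h1 : bruhatLE cs m m₀ := hmin m₀ hprop.1
    have h2 : bruhatLE cs m₀ m := hprop.2 m hmem
    exact DemazureAux.bruhatLE_antisymm cs h1 h2
  constructor
  · exact ⟨m₀, hprop, huniq⟩
  · intro m hm
    rw [huniq m hm]
    exact ⟨u₀, DemazureAux.bruhatLE_of_tle cs hu₀, hm₀, hlen₀⟩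
end

section
/- For elements x, y, z in a Coxeter group W, the following are equivalent: (1) z ≤ x * y; (2) z ◁ y⁻¹ ≤ x; (3) x⁻¹ ▷ z ≤ y. Here * is the Demazure product, ◁ and ▷ are the downwards Demazure products. -/
open List CoxeterSystem

namespace BruhatAux

open scoped Classical

set_option linter.unusedSectionVars false

variable {B W : Type*} [Group W] {M : CoxeterMatrix B} (cs : CoxeterSystem M W)

local prefix:100 "σ" => cs.simple
local prefix:100 "π" => cs.wordProd
local prefix:100 "ℓ" => cs.length

noncomputable def phiFun (i : B) : W × ZMod 2 → W × ZMod 2 :=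
  fun p => (σ i * p.1 * σ i, p.2 + if p.1 = σ i then 1 else 0)

lemma eq_conj_iff (a b c t : W) : a * t * b = c ↔ t = a⁻¹ * c * b⁻¹ := by
  constructor
  · intro h; rw [← h]; group
  · intro h; rw [h]; group

lemma simple_conj_eq_simple_iff (i : B) (t : W) :
    σ i * t * σ i = σ i ↔ t = σ i := by
  constructor
  · intro h
    have h2 := congrArg (fun x => σ i * x * σ i) h
    rw [show σ i * (σ i * t * σ i) * σ i = (σ i * σ i) * t * (σ i * σ i) by group,
      cs.simple_mul_simple_self i, one_mul, mul_one] at h2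
    rw [h2, one_mul]
  · rintro rfl
    rw [cs.simple_mul_simple_self i, one_mul]

lemma phiFun_invol (i : B) : Function.Involutive (phiFun cs i) := by
  intro p
  simp only [phiFun]
  have h1 : σ i * (σ i * p.1 * σ i) * σ i = p.1 := by
    rw [show σ i * (σ i * p.1 * σ i) * σ i = (σ i * σ i) * p.1 * (σ i * σ i) by group,
      cs.simple_mul_simple_self i, one_mul, mul_one]
  ext
  · exact h1
  · simp only [simple_conj_eq_simple_iff]
    rcases eq_or_ne p.1 (σ i) with h | h <;> simp [h]
    rw [add_assoc, show (1 : ZMod 2) + 1 = 0 by decide, add_zero]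

noncomputable def phi (i : B) : Equiv.Perm (W × ZMod 2) := (phiFun_invol cs i).toPerm

lemma phi_apply (i : B) (t : W) (ε : ZMod 2) :
    phi cs i (t, ε) = (σ i * t * σ i, ε + if t = σ i then 1 else 0) := rfl

lemma semiconj_pow (i j : B) (k : ℕ) : (σ j * σ i) ^ k * σ j = σ j * (σ i * σ j) ^ k := by
  have h : SemiconjBy (σ j) (σ i * σ j) (σ j * σ i) := by
    unfold SemiconjBy; group
  exact (h.pow_right k).symm

lemma phi_mul_pow_apply (i j : B) (k : ℕ) (t : W) (ε : ZMod 2) :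
    ((phi cs i * phi cs j) ^ k) (t, ε) =
      ((σ i * σ j) ^ k * t * (σ j * σ i) ^ k,
        ε + ∑ l ∈ Finset.range (2 * k), if t = σ j * (σ i * σ j) ^ l then 1 else 0) := by
  induction k with
  | zero => simp
  | succ k ih =>
    rw [pow_succ', Equiv.Perm.mul_apply, ih, Equiv.Perm.mul_apply, phi_apply, phi_apply]
    have hinv : ((σ i * σ j) ^ k)⁻¹ = (σ j * σ i) ^ k := by
      rw [← inv_pow]; congr 1; rw [mul_inv_rev, cs.inv_simple, cs.inv_simple]
    have hinv' : ((σ j * σ i) ^ k)⁻¹ = (σ i * σ j) ^ k := by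
      rw [← inv_pow]; congr 1; rw [mul_inv_rev, cs.inv_simple, cs.inv_simple]
    have hc1 : ((σ i * σ j) ^ k * t * (σ j * σ i) ^ k = σ j) ↔
        (t = σ j * (σ i * σ j) ^ (2 * k)) := by
      rw [eq_conj_iff, hinv, hinv', semiconj_pow, mul_assoc, ← pow_add, two_mul]
    have key : (σ j * (σ i * σ j) ^ k)⁻¹ * σ i * ((σ j * σ i) ^ k * σ j)⁻¹
        = σ j * (σ i * σ j) ^ (2 * k + 1) := by
      rw [mul_inv_rev, mul_inv_rev, hinv, hinv', cs.inv_simple]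
      calc (σ j * σ i) ^ k * σ j * σ i * (σ j * (σ i * σ j) ^ k)
          = (σ j * σ i) ^ k * σ j * (σ i * (σ j * (σ i * σ j) ^ k)) := by
            simp [mul_assoc]
        _ = σ j * (σ i * σ j) ^ k * (σ i * (σ j * (σ i * σ j) ^ k)) := by rw [semiconj_pow]
        _ = σ j * ((σ i * σ j) ^ k * (σ i * σ j * (σ i * σ j) ^ k)) := by
            simp [mul_assoc]
        _ = σ j * ((σ i * σ j) ^ k * (σ i * σ j) ^ (k + 1)) := by rw [← pow_succ']
        _ = σ j * (σ i * σ j) ^ (k + (k + 1)) := by rw [← pow_add]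
        _ = σ j * (σ i * σ j) ^ (2 * k + 1) := by rw [show k + (k + 1) = 2 * k + 1 from by omega]
    have hc2 : (σ j * ((σ i * σ j) ^ k * t * (σ j * σ i) ^ k) * σ j = σ i) ↔
        (t = σ j * (σ i * σ j) ^ (2 * k + 1)) := by
      rw [show σ j * ((σ i * σ j) ^ k * t * (σ j * σ i) ^ k) * σ j
          = (σ j * (σ i * σ j) ^ k) * t * ((σ j * σ i) ^ k * σ j) by group,
        eq_conj_iff, key]
    rw [show 2 * (k + 1) = (2 * k + 1) + 1 by ring, Finset.sum_range_succ, Finset.sum_range_succ]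
    ext
    · show σ i * (σ j * ((σ i * σ j) ^ k * t * (σ j * σ i) ^ k) * σ j) * σ i = _
      calc σ i * (σ j * ((σ i * σ j) ^ k * t * (σ j * σ i) ^ k) * σ j) * σ i
          = ((σ i * σ j) * (σ i * σ j) ^ k) * t * ((σ j * σ i) ^ k * (σ j * σ i)) := by group
        _ = _ := by rw [← pow_succ', ← pow_succ]
    · show ε + _ + _ + _ = _
      simp only [hc1, hc2]
      ring

lemma phi_liftable : M.IsLiftable (fun i => phi cs i) := by
  intro i j
  apply Equiv.ext
  rintro ⟨t, ε⟩
  rw [phi_mul_pow_apply, cs.simple_mul_simple_pow i j, cs.simple_mul_simple_pow' i j]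
  have hsum : ∑ l ∈ Finset.range (2 * M i j),
      (if t = σ j * (σ i * σ j) ^ l then (1 : ZMod 2) else 0) = 0 := by
    rw [two_mul, Finset.sum_range_add]
    have : ∀ l, (if t = σ j * (σ i * σ j) ^ (M i j + l) then (1 : ZMod 2) else 0)
        = if t = σ j * (σ i * σ j) ^ l then 1 else 0 := by
      intro l
      rw [pow_add, cs.simple_mul_simple_pow i j, one_mul]
    simp only [this]
    generalize (∑ l ∈ Finset.range (M i j),
      if t = σ j * (σ i * σ j) ^ l then (1 : ZMod 2) else 0) = S
    rw [← two_mul, show (2 : ZMod 2) = 0 by decide, zero_mul]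
  rw [hsum]
  simp

/-- counting occurrences mod 2 -/
noncomputable def countZ : List W → W → ZMod 2
  | [], _ => 0
  | a :: l, t => (if t = a then 1 else 0) + countZ l t

@[simp] lemma countZ_nil (t : W) : countZ [] t = 0 := rfl

lemma countZ_cons (a t : W) (l : List W) :
    countZ (a :: l) t = (if t = a then 1 else 0) + countZ l t := rfl

lemma countZ_append (l₁ l₂ : List W) (t : W) :
    countZ (l₁ ++ l₂) t = countZ l₁ t + countZ l₂ t := by
  induction l₁ with
  | nil => simp
  | cons a l ih => simp [countZ_cons, ih, add_assoc]

lemma countZ_map_conj (g : W) (l : List W) (t : W) :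
    countZ (l.map fun x => g * x * g⁻¹) t = countZ l (g⁻¹ * t * g) := by
  induction l with
  | nil => simp
  | cons a l ih =>
    simp only [List.map_cons, countZ_cons, ih]
    congr 1
    have h : t = g * a * g⁻¹ ↔ g⁻¹ * t * g = a := by
      constructor
      · intro h; rw [h]; group
      · intro h; rw [← h]; group
    simp [h]

lemma mem_of_countZ_ne_zero {l : List W} {t : W} (h : countZ l t ≠ 0) : t ∈ l := by
  induction l with
  | nil => simp at h
  | cons a l ih =>
    rw [countZ_cons] at h
    by_cases ht : t = a
    · simp [ht]
    · simp only [ht, if_false, zero_add] at h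
      exact mem_cons_of_mem _ (ih h)

lemma zmod2_cancel : ∀ a b : ZMod 2, a + b = 0 → b = a := by decide

lemma zmod2_self : ∀ a : ZMod 2, a + a = 0 := by decide

noncomputable def Phi : W →* Equiv.Perm (W × ZMod 2) :=
  cs.lift ⟨fun i => phi cs i, phi_liftable cs⟩

lemma Phi_simple (i : B) : Phi cs (σ i) = phi cs i :=
  cs.lift_apply_simple (phi_liftable cs) i

lemma lis_cons (i : B) (ω : List B) :
    cs.leftInvSeq (i :: ω) = σ i :: (cs.leftInvSeq ω).map (fun x => σ i * x * (σ i)⁻¹) := by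
  show σ i :: (cs.leftInvSeq ω).map (MulAut.conj (σ i)) = _
  congr 1

lemma lis_append (ω₁ ω₂ : List B) :
    cs.leftInvSeq (ω₁ ++ ω₂) =
      cs.leftInvSeq ω₁ ++ (cs.leftInvSeq ω₂).map (fun x => π ω₁ * x * (π ω₁)⁻¹) := by
  induction ω₁ with
  | nil => simp
  | cons i ω₁ ih =>
    rw [cons_append, lis_cons, ih, lis_cons, map_append, map_map, cons_append]
    congr 1
    congr 1
    apply List.map_congr_left
    intro x _
    simp only [Function.comp_apply, wordProd_cons, mul_inv_rev]
    group

lemma Phi_wordProd (ω : List B) (t : W) (ε : ZMod 2) :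
    Phi cs (π ω) (t, ε) =
      (π ω * t * (π ω)⁻¹, ε + countZ (cs.leftInvSeq ω) (π ω * t * (π ω)⁻¹)) := by
  induction ω generalizing t ε with
  | nil => simp [wordProd_nil]
  | cons i ω ih =>
    rw [wordProd_cons, map_mul, Equiv.Perm.mul_apply, ih, Phi_simple, phi_apply, lis_cons,
      countZ_cons, countZ_map_conj]
    have hconj : σ i * (π ω * t * (π ω)⁻¹) * σ i = σ i * π ω * t * (σ i * π ω)⁻¹ := by
      rw [mul_inv_rev, cs.inv_simple]; group
    rw [show (σ i)⁻¹ * (σ i * π ω * t * (σ i * π ω)⁻¹) * σ i = π ω * t * (π ω)⁻¹ by group]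
    rw [show (σ i * π ω * t * (σ i * π ω)⁻¹ = σ i) ↔ (π ω * t * (π ω)⁻¹ = σ i) by
      rw [eq_conj_iff, eq_conj_iff, show (σ i * π ω)⁻¹ * σ i * ((σ i * π ω)⁻¹)⁻¹
        = (π ω)⁻¹ * σ i * ((π ω)⁻¹)⁻¹ by group]]
    ext
    · exact hconj
    · show ε + countZ (cs.leftInvSeq ω) (π ω * t * (π ω)⁻¹)
          + (if π ω * t * (π ω)⁻¹ = σ i then 1 else 0) = _
      ring

/-- parity of the number of occurrences of a reflection `t` in any inversion
sequence of a word for `w` -/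
noncomputable def NN (w t : W) : ZMod 2 := (Phi cs w (w⁻¹ * t * w, 0)).2

lemma NN_wordProd (ω : List B) (t : W) :
    NN cs (π ω) t = countZ (cs.leftInvSeq ω) t := by
  unfold NN
  rw [Phi_wordProd]
  rw [show π ω * ((π ω)⁻¹ * t * π ω) * (π ω)⁻¹ = t by group]
  exact zero_add _

lemma NN_mul (u v t : W) : NN cs (u * v) t = NN cs u t + NN cs v (u⁻¹ * t * u) := by
  obtain ⟨ωu, -, hu⟩ := cs.exists_reduced_word' u
  obtain ⟨ωv, -, hv⟩ := cs.exists_reduced_word' v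
  subst hu hv
  rw [← cs.wordProd_append, NN_wordProd, lis_append, countZ_append, countZ_map_conj,
    NN_wordProd, NN_wordProd]

lemma NN_one (t : W) : NN cs 1 t = 0 := by
  have := NN_wordProd cs [] t
  rwa [cs.wordProd_nil] at this

lemma NN_simple (i : B) : NN cs (σ i) (σ i) = 1 := by
  have := NN_wordProd cs [i] (σ i)
  rw [cs.wordProd_singleton] at this
  rw [this]
  show (if σ i = σ i then (1 : ZMod 2) else 0) + 0 = 1
  simp

lemma NN_inv (u t : W) : NN cs u⁻¹ (u⁻¹ * t * u) = NN cs u t := by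
  apply zmod2_cancel
  rw [← NN_mul, mul_inv_cancel, NN_one]

lemma NN_reflection {t : W} (ht : cs.IsReflection t) : NN cs t t = 1 := by
  obtain ⟨r, i, rfl⟩ := ht
  set t := r * σ i * r⁻¹ with hht
  have h1 : NN cs t t = NN cs r t + NN cs (σ i * r⁻¹) (r⁻¹ * t * r) := by
    rw [← NN_mul]
    congr 1
    rw [hht]; group
  have h2 : r⁻¹ * t * r = σ i := by rw [hht]; group
  have h3 : NN cs (σ i * r⁻¹) (σ i) = 1 + NN cs r⁻¹ (σ i) := by
    rw [NN_mul, NN_simple]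
    congr 2
    rw [cs.inv_simple]
    rw [show σ i * σ i * σ i = (σ i * σ i) * σ i by group, cs.simple_mul_simple_self, one_mul]
  have h4 : NN cs r⁻¹ (σ i) = NN cs r t := by
    rw [← h2, NN_inv]
  rw [h1, h2, h3, h4]
  rw [show NN cs r t + (1 + NN cs r t) = (NN cs r t + NN cs r t) + 1 by ring, zmod2_self,
    zero_add]

lemma NN_eq_one_of_inversion {t w : W} (ht : cs.IsReflection t)
    (hlt : ℓ (t * w) < ℓ w) : NN cs w t = 1 := by
  obtain ⟨ω', hred, hw'⟩ := cs.exists_reduced_word' (t * w)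
  have hw : w = t * (t * w) := by rw [← mul_assoc, ht.mul_self, one_mul]
  have h0 : countZ (cs.leftInvSeq ω') t = 0 := by
    by_contra h
    have hm := mem_of_countZ_ne_zero h
    have h2 := (cs.isLeftInversion_of_mem_leftInvSeq hred hm).2
    rw [← hw'] at h2
    rw [← hw] at h2
    omega
  have h5 : NN cs (t * w) t = 0 := by rw [hw', NN_wordProd, h0]
  have h6 : NN cs w t = NN cs t t + NN cs (t * w) t := by
    nth_rw 1 [hw]
    rw [NN_mul]
    congr 1
    rw [ht.inv]
    rw [show t * t * t = (t * t) * t by group, ht.mul_self, one_mul]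
  rw [h6, h5, NN_reflection cs ht, add_zero]

lemma exchange_left (ω : List B) {t : W} (ht : cs.IsReflection t)
    (hlt : ℓ (t * π ω) < ℓ (π ω)) :
    ∃ j, j < ω.length ∧ t * π ω = π (ω.eraseIdx j) := by
  have h1 : NN cs (π ω) t = 1 := NN_eq_one_of_inversion cs ht hlt
  rw [NN_wordProd] at h1
  have h2 : countZ (cs.leftInvSeq ω) t ≠ 0 := by rw [h1]; decide
  have hm : t ∈ cs.leftInvSeq ω := mem_of_countZ_ne_zero h2
  obtain ⟨j, hj, hget⟩ := List.mem_iff_getElem.mp hm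
  have hjl : j < ω.length := by rw [← cs.length_leftInvSeq ω]; exact hj
  refine ⟨j, hjl, ?_⟩
  rw [← cs.getD_leftInvSeq_mul_wordProd ω j]
  congr 1
  rw [List.getD_eq_getElem _ 1 hj, hget]

lemma exchange_right (ω : List B) {t : W} (ht : cs.IsReflection t)
    (hlt : ℓ (π ω * t) < ℓ (π ω)) :
    ∃ ω', ω' <+ ω ∧ ω'.length + 1 = ω.length ∧ π ω' = π ω * t := by
  have h2 : ℓ (t * π ω.reverse) < ℓ (π ω.reverse) := by
    rw [cs.wordProd_reverse]
    rw [show t * (π ω)⁻¹ = (π ω * t)⁻¹ by rw [mul_inv_rev, ht.inv]]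
    rw [cs.length_inv, cs.length_inv]
    exact hlt
  obtain ⟨j, hj, he⟩ := exchange_left cs ω.reverse ht h2
  rw [List.length_reverse] at hj
  refine ⟨(ω.reverse.eraseIdx j).reverse, ?_, ?_, ?_⟩
  · have := (List.eraseIdx_sublist ω.reverse j).reverse
    rwa [List.reverse_reverse] at this
  · rw [List.length_reverse]
    rw [List.length_eraseIdx_add_one (by rwa [List.length_reverse])]
    exact List.length_reverse
  · rw [cs.wordProd_reverse, ← he, cs.wordProd_reverse]
    rw [mul_inv_rev, inv_inv, ht.inv]

/-! ### Bruhat order via reflection chains -/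

def lt1 (u v : W) : Prop := ∃ t, cs.IsReflection t ∧ v = u * t ∧ ℓ u < ℓ v

def le' (u v : W) : Prop := Relation.ReflTransGen (lt1 cs) u v

lemma length_le_of_le' {u v : W} (h : le' cs u v) : ℓ u ≤ ℓ v := by
  induction h with
  | refl => exact le_rfl
  | tail hs hbc ih =>
    obtain ⟨t, ht, rfl, hlt⟩ := hbc
    omega

lemma isReduced_nil : cs.IsReduced ([] : List B) := by
  show ℓ (π []) = _
  rw [cs.wordProd_nil, cs.length_one]
  rfl

/-- The deletion property: every word contains a reduced sublist with the same product. -/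
lemma deletion : ∀ n (ω : List B), ω.length ≤ n →
    ∃ ω', ω' <+ ω ∧ π ω' = π ω ∧ cs.IsReduced ω' := by
  intro n
  induction n with
  | zero =>
    intro ω h
    rw [Nat.le_zero, List.length_eq_zero_iff] at h
    subst h
    exact ⟨[], List.Sublist.refl _, rfl, isReduced_nil cs⟩
  | succ n ih =>
    intro ω h
    by_cases hred : cs.IsReduced ω
    · exact ⟨ω, List.Sublist.refl _, rfl, hred⟩
    cases ω with
    | nil => exact absurd (isReduced_nil cs) hred
    | cons i ρ =>
      simp only [List.length_cons, Nat.add_le_add_iff_right] at h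
      rcases cs.length_simple_mul (π ρ) i with hup | hdown
      · obtain ⟨ρ', hsub, hprod, hred'⟩ := ih ρ h
        refine ⟨i :: ρ', hsub.cons_cons i, ?_, ?_⟩
        · rw [cs.wordProd_cons, cs.wordProd_cons, hprod]
        · show ℓ (π (i :: ρ')) = (i :: ρ').length
          rw [cs.wordProd_cons, hprod, hup, List.length_cons]
          have : ℓ (π ρ') = ρ'.length := hred'
          rw [hprod] at this
          omega
      · obtain ⟨j, hj, he⟩ := exchange_left cs ρ (cs.isReflection_simple i) (by omega)
        obtain ⟨ω', hsub, hprod, hred'⟩ := ih (ρ.eraseIdx j)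
          (le_trans (List.length_eraseIdx_le _ _) h)
        refine ⟨ω', hsub.trans ((List.eraseIdx_sublist ρ j).trans (List.sublist_cons_self i ρ)),
          ?_, hred'⟩
        rw [hprod, ← he, cs.wordProd_cons]

/-- chains give subwords of arbitrary words -/
lemma subword_of_le' {u v : W} (h : le' cs u v) :
    ∀ ω : List B, π ω = v → ∃ ω', ω' <+ ω ∧ π ω' = u := by
  induction h using Relation.ReflTransGen.head_induction_on with
  | refl => exact fun ω hω => ⟨ω, List.Sublist.refl _, hω⟩
  | head hac hcv ih =>
    intro ω hω
    obtain ⟨ωc, hsubc, hprodc⟩ := ih ω hω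
    obtain ⟨ρ, hρsub, hρprod, hρred⟩ := deletion cs ωc.length ωc le_rfl
    obtain ⟨t, ht, hceq, hlt⟩ := hac
    have hρt : ℓ (π ρ * t) < ℓ (π ρ) := by
      rw [hρprod, hprodc, hceq, mul_assoc, ht.mul_self, mul_one]
      rw [hceq] at hlt
      exact hlt
    obtain ⟨ρ', hρ'sub, _, hρ'prod⟩ := exchange_right cs ρ ht hρt
    refine ⟨ρ', hρ'sub.trans (hρsub.trans hsubc), ?_⟩
    rw [hρ'prod, hρprod, hprodc, hceq, mul_assoc, ht.mul_self, mul_one]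

/-- the subword property: sublists of reduced words are below in the chain order -/
lemma le'_of_sublist_reduced : ∀ n, ∀ ω : List B, cs.IsReduced ω → ω.length ≤ n →
    ∀ ω' : List B, ω' <+ ω → le' cs (π ω') (π ω) := by
  intro n
  induction n using Nat.strong_induction_on with
  | _ n IH =>
    intro ω hred hlen ω' hsub
    cases ω with
    | nil =>
      rw [List.sublist_nil] at hsub
      subst hsub
      exact Relation.ReflTransGen.refl
    | cons i ρ =>
      have hρred : cs.IsReduced ρ := by
        have := hred.drop 1
        simpa using this
      have hlenv : ℓ (π (i :: ρ)) = ρ.length + 1 := by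
        have : ℓ (π (i :: ρ)) = (i :: ρ).length := hred
        simpa using this
      have hlρ : ℓ (π ρ) = ρ.length := hρred
      have hasc : ℓ (σ i * π ρ) = ℓ (π ρ) + 1 := by
        rw [← cs.wordProd_cons, hlenv, hlρ]
      have hstep : lt1 cs (π ρ) (σ i * π ρ) := by
        refine ⟨(π ρ)⁻¹ * σ i * π ρ, ⟨(π ρ)⁻¹, i, by rw [inv_inv]⟩, by group, by omega⟩
      have hn1 : ρ.length < n := by
        have : (i :: ρ).length = ρ.length + 1 := rfl
        omega
      cases hsub with
      | cons _ h' =>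
        have h1 := IH ρ.length hn1 ρ hρred le_rfl ω' h'
        rw [cs.wordProd_cons]
        exact h1.tail hstep
      | cons_cons _ h' =>
        rename_i κ'
        have hK : le' cs (π κ') (π ρ) := IH ρ.length hn1 ρ hρred le_rfl κ' h'
        -- the lifting property, proved inline
        have lift : ∀ u, le' cs u (π ρ) →
            le' cs u (σ i * π ρ) ∧ le' cs (σ i * u) (σ i * π ρ) := by
          intro u hu
          induction hu using Relation.ReflTransGen.head_induction_on with
          | refl => exact ⟨Relation.ReflTransGen.single hstep, Relation.ReflTransGen.refl⟩
          | @head a c hac hcρ ihc =>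
            obtain ⟨t, ht, hceq, hlt⟩ := hac
            have part1 : le' cs a (σ i * π ρ) :=
              Relation.ReflTransGen.head ⟨t, ht, hceq, hlt⟩ ihc.1
            refine ⟨part1, ?_⟩
            rcases cs.length_simple_mul a i with hua | hud
            · rcases cs.length_simple_mul c i with hva | hvd
              · -- ascent on both a and c : step σ i * a → σ i * c
                refine Relation.ReflTransGen.head ⟨t, ht, ?_, ?_⟩ ihc.2
                · rw [hceq, mul_assoc]
                · rw [hua, hva]
                  omega
              · -- descent on c : use the exchange property
                obtain ⟨ρ', hρ'red, hρ'⟩ := cs.exists_reduced_word' (σ i * c)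
                have hcword : π (i :: ρ') = c := by
                  rw [cs.wordProd_cons, ← hρ', cs.simple_mul_simple_cancel_left]
                have hlρ' : ℓ (σ i * c) = ρ'.length := by rw [hρ']; exact hρ'red
                have hredc : cs.IsReduced (i :: ρ') := by
                  show ℓ (π (i :: ρ')) = (i :: ρ').length
                  rw [hcword, List.length_cons]
                  omega
                have hca : π (i :: ρ') * t = a := by
                  rw [hcword, hceq, mul_assoc, ht.mul_self, mul_one]
                have hct : ℓ (π (i :: ρ') * t) < ℓ (π (i :: ρ')) := by
                  rw [hca, hcword]
                  exact hlt
                obtain ⟨σ', hσsub, hσlen, hσprod⟩ := exchange_right cs (i :: ρ') ht hct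
                rw [hca] at hσprod
                have hσlen' : σ'.length = ρ'.length := by
                  simp only [List.length_cons] at hσlen
                  omega
                have hbound : ρ'.length < n := by
                  have h1 : ℓ c ≤ ℓ (π ρ) := length_le_of_le' cs hcρ
                  omega
                cases hσsub with
                | cons _ h'' =>
                  have hσeq : σ' = ρ' := h''.eq_of_length hσlen'
                  subst hσeq
                  -- a = π ρ' = σ i * c, so σ i * a = c
                  have hia : σ i * a = c := by
                    rw [← hσprod, ← hρ', cs.simple_mul_simple_cancel_left]
                  rw [hia]
                  exact ihc.1
                | @cons_cons κ _ _ h'' =>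
                  have hκ : π κ = σ i * a := by
                    rw [cs.wordProd_cons] at hσprod
                    rw [← hσprod, cs.simple_mul_simple_cancel_left]
                  have hlek : le' cs (π κ) (π ρ') :=
                    IH ρ'.length hbound ρ' hρ'red le_rfl κ h''
                  rw [← hκ]
                  have hcρ' : π ρ' = σ i * c := hρ'.symm
                  rw [hcρ'] at hlek
                  exact hlek.trans ihc.2
            · -- descent on a : step σ i * a → a, then use part1
              have hstepa : lt1 cs (σ i * a) a := by
                refine ⟨a⁻¹ * σ i * a, ⟨a⁻¹, i, by rw [inv_inv]⟩, ?_, by omega⟩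
                rw [show σ i * a * (a⁻¹ * σ i * a) = σ i * σ i * a by group,
                  cs.simple_mul_simple_self, one_mul]
              exact Relation.ReflTransGen.head hstepa part1
        rw [cs.wordProd_cons, cs.wordProd_cons]
        exact (lift (π κ') hK).2

/-! ### Interface between `bruhatLE` and the chain order -/

lemma le'_of_bruhat {u v : W} (h : bruhatLE cs u v) : le' cs u v := by
  obtain ⟨ω, hred, hv, ω', hsub, hu⟩ := h
  rw [← hv, ← hu]
  exact le'_of_sublist_reduced cs ω.length ω hred le_rfl ω' hsub

lemma bruhat_of_le' {u v : W} (h : le' cs u v) : bruhatLE cs u v := by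
  obtain ⟨ω, hred, hv⟩ := cs.exists_reduced_word' v
  obtain ⟨ω', hsub, hprod⟩ := subword_of_le' cs h ω hv.symm
  exact ⟨ω, hred, hv.symm, ω', hsub, hprod⟩

lemma bruhat_trans {u v w : W} (h1 : bruhatLE cs u v) (h2 : bruhatLE cs v w) :
    bruhatLE cs u w :=
  bruhat_of_le' cs ((le'_of_bruhat cs h1).trans (le'_of_bruhat cs h2))

lemma bruhat_inv {u v : W} (h : bruhatLE cs u v) : bruhatLE cs u⁻¹ v⁻¹ := by
  obtain ⟨ω, hred, hv, ω', hsub, hu⟩ := h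
  exact ⟨ω.reverse, (cs.isReduced_reverse_iff ω).mpr hred, by rw [cs.wordProd_reverse, hv],
    ω'.reverse, hsub.reverse, by rw [cs.wordProd_reverse, hu]⟩

lemma bruhat_subword {u v : W} (h : bruhatLE cs u v) (ω : List B) (hω : π ω = v) :
    ∃ ω', ω' <+ ω ∧ π ω' = u :=
  subword_of_le' cs (le'_of_bruhat cs h) ω hω

end BruhatAux

open BruhatAux in
/-- For `x, y, z` in a Coxeter group: `z ≤ x * y` iff `z ◁ y⁻¹ ≤ x` iff
`x⁻¹ ▷ z ≤ y`, where `x * y = max {uv : u ≤ x, v ≤ y}`,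
`z ◁ y⁻¹ = min {zv : v ≤ y⁻¹}` and `x⁻¹ ▷ z = min {uz : u ≤ x⁻¹}`. -/
theorem demazure_product_adjunction {B W : Type*} [Group W] {M : CoxeterMatrix B}
    (cs : CoxeterSystem M W) (x y z m a b : W)
    (hmem : ∃ u v : W, bruhatLE cs u x ∧ bruhatLE cs v y ∧ m = u * v)
    (hmax : ∀ w : W, (∃ u v : W, bruhatLE cs u x ∧ bruhatLE cs v y ∧ w = u * v) →
      bruhatLE cs w m)
    (hamem : ∃ v : W, bruhatLE cs v y⁻¹ ∧ a = z * v)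
    (hamin : ∀ w : W, (∃ v : W, bruhatLE cs v y⁻¹ ∧ w = z * v) → bruhatLE cs a w)
    (hbmem : ∃ u : W, bruhatLE cs u x⁻¹ ∧ b = u * z)
    (hbmin : ∀ w : W, (∃ u : W, bruhatLE cs u x⁻¹ ∧ w = u * z) → bruhatLE cs b w) :
    (bruhatLE cs z m ↔ bruhatLE cs a x) ∧ (bruhatLE cs a x ↔ bruhatLE cs b y) := by
  have key1 : bruhatLE cs z m → bruhatLE cs a x ∧ bruhatLE cs b y := by
    intro hz
    obtain ⟨u, v, hux, hvy, hm⟩ := hmem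
    obtain ⟨lu, hlu_red, hlu⟩ := cs.exists_reduced_word' u
    obtain ⟨lv, hlv_red, hlv⟩ := cs.exists_reduced_word' v
    have hmword : cs.wordProd (lu ++ lv) = m := by
      rw [cs.wordProd_append, ← hlu, ← hlv, hm]
    obtain ⟨l', hsub, hprod⟩ := bruhat_subword cs hz (lu ++ lv) hmword
    rw [List.sublist_append_iff] at hsub
    obtain ⟨l1, l2, rfl, h1, h2⟩ := hsub
    have hu' : bruhatLE cs (cs.wordProd l1) u := ⟨lu, hlu_red, hlu.symm, l1, h1, rfl⟩
    have hv' : bruhatLE cs (cs.wordProd l2) v := ⟨lv, hlv_red, hlv.symm, l2, h2, rfl⟩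
    have hzz : z = cs.wordProd l1 * cs.wordProd l2 := by
      rw [← cs.wordProd_append, hprod]
    have hu'x := bruhat_trans cs hu' hux
    have hv'y := bruhat_trans cs hv' hvy
    constructor
    · have hvinv : bruhatLE cs (cs.wordProd l2)⁻¹ y⁻¹ := bruhat_inv cs hv'y
      have ha := hamin (z * (cs.wordProd l2)⁻¹) ⟨(cs.wordProd l2)⁻¹, hvinv, rfl⟩
      have heq : z * (cs.wordProd l2)⁻¹ = cs.wordProd l1 := by rw [hzz]; group
      rw [heq] at ha
      exact bruhat_trans cs ha hu'x
    · have huinv : bruhatLE cs (cs.wordProd l1)⁻¹ x⁻¹ := bruhat_inv cs hu'x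
      have hb := hbmin ((cs.wordProd l1)⁻¹ * z) ⟨(cs.wordProd l1)⁻¹, huinv, rfl⟩
      have heq : (cs.wordProd l1)⁻¹ * z = cs.wordProd l2 := by rw [hzz]; group
      rw [heq] at hb
      exact bruhat_trans cs hb hv'y
  have key2 : bruhatLE cs a x → bruhatLE cs z m := by
    intro hax
    obtain ⟨v₀, hv₀, haeq⟩ := hamem
    have hz : z = a * v₀⁻¹ := by rw [haeq]; group
    have hv₀y : bruhatLE cs v₀⁻¹ y := by
      have := bruhat_inv cs hv₀
      rwa [inv_inv] at this
    exact hmax z ⟨a, v₀⁻¹, hax, hv₀y, hz⟩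
  have key3 : bruhatLE cs b y → bruhatLE cs z m := by
    intro hby
    obtain ⟨u₀, hu₀, hbeq⟩ := hbmem
    have hz : z = u₀⁻¹ * b := by rw [hbeq]; group
    have hu₀x : bruhatLE cs u₀⁻¹ x := by
      have := bruhat_inv cs hu₀
      rwa [inv_inv] at this
    exact hmax z ⟨u₀⁻¹, b, hu₀x, hby, hz⟩
  exact ⟨⟨fun h => (key1 h).1, key2⟩,
    ⟨fun h => (key1 (key2 h)).2, fun h => (key1 (key3 h)).1⟩⟩
end
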